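/- Let m be a multiset of natural numbers of cardinality n ≥ 1 with (card m) − (sum of the entries of m) = 1, and for each natural number d let m_d denote the multiplicity of d in m. Then the number of well-formed expressions whose underlying multiset is m equals (n − 1)! divided by the product over d of (m_d)! ; equivalently, it equals (1/n) · n!/∏_d (m_d)!. -/

import Mathlib

/-- `C v` is the length of `v` minus the sum of its entries. -/
def C (v : List ℕ) : ℤ := (v.length : ℤ) - (v.sum : ℤ)

/-- A list of natural numbers is a well-formed expression (Polish notation
encoding of an ordered rooted tree by outdegrees) if it is of the form
`d :: (w₁ ++ ⋯ ++ w_d)` where each `wᵢ` is a well-formed expression. -/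
inductive IsWF : List ℕ → Prop
  | node (d : ℕ) (ws : List (List ℕ)) (hlen : ws.length = d)
      (h : ∀ w ∈ ws, IsWF w) : IsWF (d :: ws.flatten)

/-- The `k`-rotation of `s = u ++ v` with `v` of length `k` is `v ++ u`. -/
def krot (k : ℕ) (s : List ℕ) : List ℕ :=
  s.drop (s.length - k) ++ s.take (s.length - k)


lemma C_nil : C [] = 0 := by simp [C]
lemma C_append (a b : List ℕ) : C (a ++ b) = C a + C b := by simp [C]; ring
lemma C_cons (d : ℕ) (t : List ℕ) : C (d :: t) = 1 - d + C t := by simp [C]; ring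
lemma C_le_length (l : List ℕ) : C l ≤ l.length := by
  simp only [C]; have : (0:ℤ) ≤ l.sum := by positivity
  omega

lemma prefix_append_cases {p a b : List ℕ} (h : p <+: a ++ b) :
    p <+: a ∨ ∃ q, q <+: b ∧ p = a ++ q := by
  rw [List.prefix_iff_eq_take, List.take_append] at h
  by_cases hl : p.length ≤ a.length
  · left
    rw [h, Nat.sub_eq_zero_of_le hl, List.take_zero, List.append_nil]
    exact List.take_prefix _ _
  · right
    rw [List.take_of_length_le (le_of_not_ge hl)] at h
    exact ⟨List.take (p.length - a.length) b, List.take_prefix _ _, h⟩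

/-- dominance condition -/
def Dom (w : List ℕ) : Prop := C w = 1 ∧ ∀ p, p <+: w → p ≠ w → C p ≤ 0

lemma Dom.ne_nil {w : List ℕ} (h : Dom w) : w ≠ [] := by
  rintro rfl; simpa [C_nil] using h.1

lemma flatten_C {ws : List (List ℕ)} (h : ∀ w ∈ ws, C w = 1) :
    C ws.flatten = ws.length := by
  induction ws with
  | nil => simp [C_nil]
  | cons w rest ih =>
    rw [List.flatten_cons, C_append, h w (by simp), ih (fun x hx => h x (by simp [hx]))]
    simp only [List.length_cons]; push_cast; ring

lemma flatten_prefix_C : ∀ {ws : List (List ℕ)}, (∀ w ∈ ws, Dom w) →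
    ∀ p, p <+: ws.flatten → p ≠ ws.flatten → C p ≤ (ws.length : ℤ) - 1 := by
  intro ws
  induction ws with
  | nil => intro _ p hp hne; rw [List.flatten_nil, List.prefix_nil] at hp; exact absurd hp hne
  | cons w rest ih =>
    intro h p hp hne
    rw [List.flatten_cons] at hp hne
    rcases prefix_append_cases hp with hw | ⟨q, hq, rfl⟩
    · by_cases hpw : p = w
      · have hrest : rest.flatten ≠ [] := by
          intro h0; apply hne; rw [hpw, h0, List.append_nil]
        have h1 : rest ≠ [] := by rintro rfl; simp at hrest
        have : 1 ≤ rest.length := List.length_pos_iff.mpr h1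
        rw [hpw, (h w (by simp)).1]
        simp only [List.length_cons]
        push_cast; omega
      · have := (h w (by simp)).2 p hw hpw
        simp only [List.length_cons]; push_cast; omega
    · have hqne : q ≠ rest.flatten := by
        rintro rfl; exact hne rfl
      have := ih (fun x hx => h x (by simp [hx])) q hq hqne
      rw [C_append, (h w (by simp)).1]
      simp only [List.length_cons]; push_cast; omega

lemma IsWF.dom {w : List ℕ} (h : IsWF w) : Dom w := by
  induction h with
  | node d ws hlen h ih =>
    have hC1 : ∀ x ∈ ws, C x = 1 := fun x hx => (ih x hx).1
    constructor
    · rw [C_cons, flatten_C hC1, hlen]; ring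
    · intro p hp hne
      rcases List.prefix_cons_iff.mp hp with rfl | ⟨t, rfl, ht⟩
      · rw [C_nil]
      · have htne : t ≠ ws.flatten := by rintro rfl; exact hne rfl
        have := flatten_prefix_C ih t ht htne
        rw [C_cons]; rw [hlen] at this; omega


lemma C_take_succ (s : List ℕ) (j : ℕ) : C (s.take (j+1)) ≤ C (s.take j) + 1 := by
  rw [List.take_add, C_append]
  have h1 : C ((s.drop j).take 1) ≤ ((s.drop j).take 1).length := C_le_length _
  have h2 : ((s.drop j).take 1).length ≤ 1 := by
    rw [List.length_take]; omega
  omega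

lemma length_lt_of_proper_prefix {p t : List ℕ} (hp : p <+: t) (hne : p ≠ t) :
    p.length < t.length := by
  rcases lt_or_eq_of_le hp.length_le with h | h
  · exact h
  · exact absurd (List.IsPrefix.eq_of_length hp h) hne

lemma exists_flatten : ∀ (N : ℕ) (t : List ℕ), t.length ≤ N → ∀ (k : ℕ), C t = k →
    (∀ p, p <+: t → p ≠ t → C p ≤ (k : ℤ) - 1) →
    ∃ ws : List (List ℕ), ws.length = k ∧ (∀ w ∈ ws, IsWF w) ∧ ws.flatten = t := by
  intro N
  induction N with
  | zero =>
    intro t hlen k hk _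
    have : t = [] := List.eq_nil_of_length_eq_zero (Nat.le_zero.mp hlen)
    subst this
    have : k = 0 := by rw [C_nil] at hk; exact_mod_cast hk.symm
    exact ⟨[], by simp [this]⟩
  | succ N ihN =>
    intro t hlen k hk hp
    by_cases ht : t = []
    · subst ht
      have : k = 0 := by rw [C_nil] at hk; exact_mod_cast hk.symm
      exact ⟨[], by simp [this]⟩
    · have hk1 : 1 ≤ k := by
        have := hp [] (List.nil_prefix) (Ne.symm (by simpa using Ne.symm ht))
        rw [C_nil] at this
        omega
      -- find minimal i with 1 ≤ C (take i t)
      have hPn : t.length ≤ t.length ∧ 1 ≤ C (t.take t.length) := by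
        refine ⟨le_rfl, ?_⟩
        rw [List.take_length, hk]; exact_mod_cast hk1
      have hex : ∃ i, i ≤ t.length ∧ 1 ≤ C (t.take i) := ⟨t.length, hPn⟩
      obtain ⟨i, ⟨hile, hige⟩, hmin'⟩ :
          ∃ i, (i ≤ t.length ∧ 1 ≤ C (t.take i)) ∧
            ∀ j, j < i → ¬(j ≤ t.length ∧ 1 ≤ C (t.take j)) :=
        ⟨Nat.find hex, Nat.find_spec hex, fun j hj => Nat.find_min hex hj⟩
      have hmin : ∀ j, j < i → C (t.take j) ≤ 0 := by
        intro j hj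
        have h6 := hmin' j hj
        push_neg at h6
        have := h6 (le_trans (le_of_lt hj) hile)
        omega
      have hi1 : 1 ≤ i := by
        rcases Nat.eq_zero_or_pos i with h0 | h
        · exfalso; rw [h0] at hige; simp [C_nil] at hige
        · exact h
      have hCi : C (t.take i) = 1 := by
        have h2 : C (t.take i) ≤ C (t.take (i-1)) + 1 := by
          have := C_take_succ t (i-1)
          rwa [Nat.sub_add_cancel hi1] at this
        have := hmin (i-1) (by omega)
        omega
      set w₁ := t.take i with hw₁
      set r := t.drop i with hr
      have hw₁len : w₁.length = i := by
        rw [hw₁, List.length_take, min_eq_left hile]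
      -- w₁ is nonempty
      rcases hw : w₁ with _ | ⟨a, u₁⟩
      · exfalso; rw [hw] at hw₁len; simp at hw₁len; omega
      · -- C u₁ = a
        have hCw₁ : C (a :: u₁) = 1 := by rw [← hw]; exact hCi
        have hCu₁ : C u₁ = a := by rw [C_cons] at hCw₁; omega
        have hu₁pre : ∀ p, p <+: u₁ → p ≠ u₁ → C p ≤ (a:ℤ) - 1 := by
          intro p hpre hne
          have hcons : (a :: p) <+: t := by
            refine List.IsPrefix.trans ?_ (List.take_prefix i t)
            rw [← hw₁, hw]
            exact List.cons_prefix_cons.mpr ⟨rfl, hpre⟩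
          have hlen2 : (a :: p).length < i := by
            have := length_lt_of_proper_prefix hpre hne
            have : (a::p).length < (a::u₁).length := by simpa using Nat.succ_lt_succ this
            rw [← hw, hw₁len] at this
            exact this
          have heq : t.take (a::p).length = a :: p := (List.prefix_iff_eq_take.mp hcons).symm
          have := hmin _ hlen2
          rw [heq, C_cons] at this
          omega
        have hu₁len : u₁.length ≤ N := by
          have : (a :: u₁).length = i := by rw [← hw, hw₁len]
          simp at this
          omega
        obtain ⟨ws₁, hws₁len, hws₁wf, hws₁fl⟩ := ihN u₁ hu₁len a hCu₁ hu₁pre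
        have hWFw₁ : IsWF w₁ := by
          rw [hw, ← hws₁fl]
          exact IsWF.node a ws₁ hws₁len hws₁wf
        -- the remainder
        have htwr : w₁ ++ r = t := List.take_append_drop i t
        have hCr : C r = (k - 1 : ℤ) := by
          have h5 := C_append w₁ r
          rw [htwr, hk] at h5
          have hcw : C w₁ = 1 := by rw [hw]; exact hCw₁
          omega
        have hrlen : r.length ≤ N := by
          rw [hr, List.length_drop]
          omega
        have hrpre : ∀ p, p <+: r → p ≠ r → C p ≤ ((k-1 : ℕ) : ℤ) - 1 := by
          intro p hpre hne
          have h1 : (w₁ ++ p) <+: t := by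
            rw [← htwr]
            exact (List.prefix_append_right_inj w₁).mpr hpre
          have h2 : (w₁ ++ p) ≠ t := by
            rw [← htwr]
            intro hcontra
            exact hne (List.append_cancel_left hcontra)
          have := hp _ h1 h2
          rw [C_append] at this
          have hcw : C w₁ = 1 := by rw [hw]; exact hCw₁
          push_cast [Nat.cast_sub hk1]
          omega
        have hCr' : C r = ((k-1 : ℕ) : ℤ) := by
          push_cast [Nat.cast_sub hk1]; omega
        obtain ⟨ws₂, hws₂len, hws₂wf, hws₂fl⟩ := ihN r hrlen (k-1) hCr' hrpre
        refine ⟨w₁ :: ws₂, ?_, ?_, ?_⟩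
        · simp [hws₂len]; omega
        · intro x hx
          rcases List.mem_cons.mp hx with rfl | hx2
          · exact hWFw₁
          · exact hws₂wf x hx2
        · rw [List.flatten_cons, hws₂fl, htwr]


lemma dom_isWF {w : List ℕ} (h : Dom w) : IsWF w := by
  obtain ⟨hC1, hpre⟩ := h
  have hne : w ≠ [] := by rintro rfl; simp [C_nil] at hC1
  rcases w with _ | ⟨d, t⟩
  · exact absurd rfl hne
  · have hCt : C t = (d : ℤ) := by rw [C_cons] at hC1; omega
    have hpret : ∀ p, p <+: t → p ≠ t → C p ≤ (d:ℤ) - 1 := by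
      intro p hp hpne
      have h1 : (d :: p) <+: (d :: t) := List.cons_prefix_cons.mpr ⟨rfl, hp⟩
      have h2 : (d :: p) ≠ (d :: t) := by
        intro hc; exact hpne (by injection hc)
      have := hpre _ h1 h2
      rw [C_cons] at this
      omega
    obtain ⟨ws, hlen, hwf, hfl⟩ := exists_flatten t.length t le_rfl d hCt hpret
    rw [← hfl]
    exact IsWF.node d ws hlen hwf

lemma isWF_iff_dom {w : List ℕ} : IsWF w ↔ Dom w := ⟨IsWF.dom, fun h => dom_isWF h⟩

lemma ne_of_length_lt {p w : List ℕ} (h : p.length < w.length) : p ≠ w := by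
  intro e; rw [e] at h; exact lt_irrefl _ h

lemma C_rot (s : List ℕ) (i : ℕ) : C (s.drop i ++ s.take i) = C s := by
  rw [C_append, add_comm, ← C_append, List.take_append_drop]

lemma C_take_drop (s : List ℕ) (i : ℕ) : C (s.take i) + C (s.drop i) = C s := by
  rw [← C_append, List.take_append_drop]

lemma rot_unique {s : List ℕ} {p q : ℕ} (hp : 0 < p) (hpq : p < q) (hq : q ≤ s.length)
    (h1 : IsWF (s.drop p ++ s.take p)) (h2 : IsWF (s.drop q ++ s.take q)) : False := by
  obtain ⟨hC2, hpre2⟩ := h2.dom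
  obtain ⟨hC1, hpre1⟩ := h1.dom
  have hn0 : 0 < s.length := lt_of_lt_of_le (lt_trans hp hpq) hq
  have hCs : C s = 1 := by rw [← C_rot s q]; exact hC2
  -- F1 : drop q s is a proper prefix of w2
  have hF1 : C (s.drop q) ≤ 0 := by
    refine hpre2 _ (List.prefix_append _ _) (ne_of_length_lt ?_)
    simp only [List.length_append, List.length_drop, List.length_take]
    omega
  -- F2 : drop q s ++ take p s is a proper prefix of w2
  have htpq : s.take p <+: s.take q := by
    have h3 : s.take p = (s.take q).take p := by
      rw [List.take_take, min_eq_left hpq.le]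
    rw [h3]; exact List.take_prefix _ _
  have hF2 : C (s.drop q) + C (s.take p) ≤ 0 := by
    have := hpre2 _ ((List.prefix_append_right_inj _).mpr htpq) (ne_of_length_lt (by
      simp only [List.length_append, List.length_drop, List.length_take]
      omega))
    rwa [C_append] at this
  -- F3 : (drop p s).take (q - p) is a proper prefix of w1
  have hsplit := List.take_add (l := s) (i := p) (j := q - p)
  rw [Nat.add_sub_cancel' hpq.le] at hsplit
  have hF3 : C (s.take q) - C (s.take p) ≤ 0 := by
    have h4 := hpre1 ((s.drop p).take (q - p))
      ((List.take_prefix _ _).trans (List.prefix_append _ _))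
      (ne_of_length_lt (by
        simp only [List.length_append, List.length_drop, List.length_take]
        omega))
    have h5 : C (s.take q) = C (s.take p) + C ((s.drop p).take (q - p)) := by
      rw [hsplit, C_append]
    omega
  have h6 := C_take_drop s q
  omega

lemma rot_exists {s : List ℕ} (hs : s ≠ []) (hCs : C s = 1) :
    ∃ i, 1 ≤ i ∧ i ≤ s.length ∧ IsWF (s.drop i ++ s.take i) := by
  classical
  set n := s.length with hn
  have hex : ∃ i, i ≤ n ∧ ∀ j, j ≤ n → C (s.take j) ≤ C (s.take i) := by
    obtain ⟨i, hi, hmax⟩ := (Finset.range (n+1)).exists_max_image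
      (fun i => C (s.take i)) ⟨0, by simp⟩
    exact ⟨i, Nat.lt_succ_iff.mp (Finset.mem_range.mp hi),
      fun j hj => hmax j (Finset.mem_range.mpr (by omega))⟩
  obtain ⟨i, ⟨hin, hmax⟩, hless⟩ :
      ∃ i, (i ≤ n ∧ ∀ j, j ≤ n → C (s.take j) ≤ C (s.take i)) ∧
        ∀ t, t < i → ¬(t ≤ n ∧ ∀ j, j ≤ n → C (s.take j) ≤ C (s.take t)) :=
    ⟨Nat.find hex, Nat.find_spec hex, fun t ht => Nat.find_min hex ht⟩
  have hlt : ∀ t, t < i → C (s.take t) < C (s.take i) := by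
    intro t ht
    have h6 := hless t ht
    push_neg at h6
    obtain ⟨j, hj, hgt⟩ := h6 (le_trans ht.le hin)
    exact lt_of_lt_of_le hgt (hmax j hj)
  have hgn : C (s.take n) = 1 := by rw [hn, List.take_length, hCs]
  have hi1 : 1 ≤ i := by
    rcases Nat.eq_zero_or_pos i with h0 | h
    · exfalso
      have h7 := hmax n le_rfl
      rw [h0, List.take_zero, C_nil, hgn] at h7
      omega
    · exact h
  refine ⟨i, hi1, hin, dom_isWF ⟨by rw [C_rot]; exact hCs, ?_⟩⟩
  intro p hp hne
  rcases prefix_append_cases hp with h1 | ⟨q, hq, rfl⟩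
  · have hpe : p = (s.drop i).take p.length := List.prefix_iff_eq_take.mp h1
    have hplen : p.length ≤ n - i := by
      have := h1.length_le; simpa [List.length_drop] using this
    have hsplit := List.take_add (l := s) (i := i) (j := p.length)
    have h8 : C (s.take (i + p.length)) = C (s.take i) + C p := by
      rw [hsplit, C_append, ← hpe]
    have hle := hmax (i + p.length) (by omega)
    omega
  · have hql : q.length ≤ i := by
      have := hq.length_le; simp only [List.length_take] at this; omega
    have hqe : q = s.take q.length := by
      have h2 := List.prefix_iff_eq_take.mp hq
      rw [List.take_take] at h2
      rwa [min_eq_left hql] at h2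
    have hqlt : q.length < i := by
      rcases eq_or_lt_of_le hql with he | h
      · exfalso
        apply hne
        rw [hqe, he]
      · exact h
    have h9 := hlt q.length hqlt
    have hdi := C_take_drop s i
    have h10 : C (s.drop i ++ q) = C (s.drop i) + C (s.take q.length) := by
      rw [C_append, ← hqe]
    omega

noncomputable def permsF (m : Multiset ℕ) : Finset (List ℕ) := m.toList.permutations.toFinset

lemma mem_permsF {m : Multiset ℕ} {w : List ℕ} : w ∈ permsF m ↔ (↑w : Multiset ℕ) = m := by
  rw [permsF, List.mem_toFinset, List.mem_permutations]
  constructor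
  · intro h; rw [← m.coe_toList]; exact Multiset.coe_eq_coe.mpr h
  · intro h; rw [← m.coe_toList] at h; exact Multiset.coe_eq_coe.mp h

lemma permsF_eq_biUnion {m : Multiset ℕ} (hm : m ≠ 0) :
    permsF m = m.toFinset.biUnion (fun d => (permsF (m.erase d)).image (d :: ·)) := by
  ext w
  simp only [Finset.mem_biUnion, Finset.mem_image, mem_permsF, Multiset.mem_toFinset]
  constructor
  · intro hw
    cases w with
    | nil => exfalso; apply hm; rw [← hw]; rfl
    | cons d t =>
      have hd : d ∈ m := by rw [← hw]; simp
      refine ⟨d, hd, t, ?_, rfl⟩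
      rw [← hw]
      simp [Multiset.cons_coe]
  · rintro ⟨d, hd, t, ht, rfl⟩
    rw [← Multiset.cons_coe, ht, Multiset.cons_erase hd]

lemma permsF_card : ∀ (n : ℕ) (m : Multiset ℕ), Multiset.card m = n →
    (permsF m).card * ∏ d ∈ m.toFinset, (m.count d).factorial = n.factorial := by
  intro n
  induction n with
  | zero =>
    intro m hm
    rw [Multiset.card_eq_zero] at hm
    subst hm
    simp [permsF]
  | succ n ih =>
    intro m hm
    have hm0 : m ≠ 0 := by rintro rfl; simp at hm
    rw [permsF_eq_biUnion hm0, Finset.card_biUnion, Finset.sum_mul]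
    · have key : ∀ d ∈ m.toFinset,
          ((permsF (m.erase d)).image (d :: ·)).card * ∏ e ∈ m.toFinset, (m.count e).factorial
            = m.count d * n.factorial := by
        intro d hd
        have hdm : d ∈ m := Multiset.mem_toFinset.mp hd
        have hcount : 1 ≤ m.count d := Multiset.one_le_count_iff_mem.mpr hdm
        rw [Finset.card_image_of_injective _ (fun a b h => by injection h)]
        have hcarde : Multiset.card (m.erase d) = n := by
          rw [Multiset.card_erase_of_mem hdm, hm]; rfl
        have hsub : (m.erase d).toFinset ⊆ m.toFinset :=
          Multiset.toFinset_subset.mpr (Multiset.erase_subset d m)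
        have hprod1 : ∏ e ∈ m.toFinset, (m.count e).factorial
            = m.count d * ∏ e ∈ m.toFinset, ((m.erase d).count e).factorial := by
          rw [← Finset.mul_prod_erase _ _ hd, ← Finset.mul_prod_erase _ (fun e => ((m.erase d).count e).factorial) hd]
          rw [Multiset.count_erase_self]
          rw [← Nat.mul_factorial_pred (by omega : m.count d ≠ 0)]
          rw [mul_assoc]
          congr 1
          congr 1
          apply Finset.prod_congr rfl
          intro e he
          rw [Multiset.count_erase_of_ne (Finset.ne_of_mem_erase he)]
        have hprod2 : ∏ e ∈ m.toFinset, ((m.erase d).count e).factorial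
            = ∏ e ∈ (m.erase d).toFinset, ((m.erase d).count e).factorial := by
          symm
          apply Finset.prod_subset hsub
          intro e _ he
          rw [Multiset.count_eq_zero_of_notMem (fun hc => he (Multiset.mem_toFinset.mpr hc))]
          rfl
        rw [hprod1, hprod2]
        rw [← mul_assoc, mul_comm ((permsF (m.erase d)).card) (m.count d), mul_assoc]
        rw [ih (m.erase d) hcarde]
      rw [Finset.sum_congr rfl key, ← Finset.sum_mul, Multiset.toFinset_sum_count_eq, hm]
      rw [Nat.factorial_succ]
    · intro d _ e _ hde
      simp only [Finset.disjoint_left, Finset.mem_image]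
      rintro w ⟨x, _, rfl⟩ ⟨y, _, hy⟩
      exact hde (by injection hy with h1 h2; exact h1.symm)


lemma rot_coe (s : List ℕ) (i : ℕ) :
    ((s.drop i ++ s.take i : List ℕ) : Multiset ℕ) = (↑s : Multiset ℕ) := by
  rw [Multiset.coe_eq_coe]
  have := List.perm_append_comm (l₁ := s.drop i) (l₂ := s.take i)
  rwa [List.take_append_drop] at this

lemma krot_length (k : ℕ) (s : List ℕ) : (krot k s).length = s.length := by
  simp only [krot, List.length_append, List.length_drop, List.length_take]
  omega

lemma krot_inv {w : List ℕ} {k : ℕ} (h : k ≤ w.length) :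
    (krot k w).drop k ++ (krot k w).take k = w := by
  have h1 : (w.drop (w.length - k)).length = w.length - (w.length - k) := List.length_drop
  rw [Nat.sub_sub_self h] at h1
  rw [krot, List.drop_left' h1, List.take_left' h1, List.take_append_drop]

open Classical in
noncomputable def wfF (m : Multiset ℕ) : Finset (List ℕ) :=
  (permsF m).filter (fun w => IsWF w)

lemma mem_wfF {m : Multiset ℕ} {w : List ℕ} :
    w ∈ wfF m ↔ (↑w : Multiset ℕ) = m ∧ IsWF w := by
  classical
  rw [wfF]
  simp [Finset.mem_filter, mem_permsF]

lemma C_of_coe_eq {m : Multiset ℕ} (hC : (Multiset.card m : ℤ) - (m.sum : ℤ) = 1)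
    {w : List ℕ} (h : (↑w : Multiset ℕ) = m) : C w = 1 := by
  subst h
  simpa [C] using hC

lemma rot_unique' {s : List ℕ} {n k k' : ℕ} (hs : s.length = n) (hkk : k < k') (hk' : k' < n)
    (h1 : IsWF (s.drop k ++ s.take k)) (h2 : IsWF (s.drop k' ++ s.take k')) : False := by
  rcases Nat.eq_zero_or_pos k with rfl | hk0
  · -- rotate at 0 is s itself; use q = n
    rw [List.drop_zero, List.take_zero, List.append_nil] at h1
    have hn : IsWF (s.drop n ++ s.take n) := by
      rw [← hs, List.drop_length, List.take_length, List.nil_append]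
      exact h1
    exact rot_unique hkk hk' hs.ge h2 hn
  · exact rot_unique hk0 hkk (by omega) h1 h2

lemma permsF_eq_rot_biUnion (m : Multiset ℕ) (n : ℕ) (hn : Multiset.card m = n) (hn1 : 1 ≤ n)
    (hC : (Multiset.card m : ℤ) - (m.sum : ℤ) = 1) :
    permsF m = (Finset.range n).biUnion (fun k => (wfF m).image (krot k)) := by
  ext s
  simp only [Finset.mem_biUnion, Finset.mem_range, Finset.mem_image, mem_permsF, mem_wfF]
  constructor
  · intro hs
    have hlen : s.length = n := by
      rw [← hn, ← hs, Multiset.coe_card]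
    have hCs : C s = 1 := C_of_coe_eq hC hs
    have hsne : s ≠ [] := by
      intro h; rw [h] at hlen; simp at hlen; omega
    obtain ⟨i, hi1, hin, hwf⟩ := rot_exists hsne hCs
    rw [hlen] at hin
    by_cases hmid : i = n
    · refine ⟨0, by omega, s, ⟨hs, ?_⟩, ?_⟩
      · have heq : s.drop i ++ s.take i = s := by
          rw [hmid, ← hlen, List.drop_length, List.take_length, List.nil_append]
        rwa [heq] at hwf
      · rw [krot, Nat.sub_zero, List.drop_length, List.take_length, List.nil_append]
    · refine ⟨i, by omega, s.drop i ++ s.take i, ⟨by rw [rot_coe]; exact hs, hwf⟩, ?_⟩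
      have h1 : (s.drop i).length = n - i := by rw [List.length_drop, hlen]
      have h2 : (s.drop i ++ s.take i).length = n := by
        simp only [List.length_append, List.length_drop, List.length_take]; omega
      rw [krot, h2, List.drop_left' h1, List.take_left' h1, List.take_append_drop]
  · rintro ⟨k, hk, w, ⟨hw, _⟩, rfl⟩
    rw [krot, rot_coe]
    exact hw

lemma permsF_card_eq_mul (m : Multiset ℕ) (n : ℕ) (hn : Multiset.card m = n) (hn1 : 1 ≤ n)
    (hC : (Multiset.card m : ℤ) - (m.sum : ℤ) = 1) :
    (permsF m).card = n * (wfF m).card := by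
  have hlenwf : ∀ w ∈ wfF m, w.length = n := by
    intro w hw
    rw [← hn, ← (mem_wfF.mp hw).1, Multiset.coe_card]
  rw [permsF_eq_rot_biUnion m n hn hn1 hC, Finset.card_biUnion]
  · have hcongr : ∀ k ∈ Finset.range n, ((wfF m).image (krot k)).card = (wfF m).card := by
      intro k hk
      apply Finset.card_image_of_injOn
      intro x hx y hy hxy
      have hkx : k ≤ x.length := by rw [hlenwf x hx]; exact (Finset.mem_range.mp hk).le
      have hky : k ≤ y.length := by rw [hlenwf y hy]; exact (Finset.mem_range.mp hk).le
      rw [← krot_inv hkx, ← krot_inv hky, hxy]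
    rw [Finset.sum_congr rfl hcongr, Finset.sum_const, Finset.card_range, smul_eq_mul]
  · intro k hk k' hk' hne
    simp only [Finset.disjoint_left, Finset.mem_image]
    rintro s ⟨x, hx, rfl⟩ ⟨y, hy, hxy⟩
    obtain ⟨hxm, hxwf⟩ := mem_wfF.mp hx
    obtain ⟨hym, hywf⟩ := mem_wfF.mp hy
    have hkx : k ≤ x.length := by rw [hlenwf x hx]; exact le_of_lt (Finset.mem_range.mp hk)
    have hky : k' ≤ y.length := by rw [hlenwf y hy]; exact le_of_lt (Finset.mem_range.mp hk')
    have hslen : (krot k x).length = n := by rw [krot_length, hlenwf x hx]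
    have hxeq : x = (krot k x).drop k ++ (krot k x).take k := (krot_inv hkx).symm
    have hyeq : y = (krot k x).drop k' ++ (krot k x).take k' := by
      rw [← hxy]; exact (krot_inv hky).symm
    rw [hxeq] at hxwf
    rw [hyeq] at hywf
    rcases Ne.lt_or_gt hne with h | h
    · exact rot_unique' hslen h (Finset.mem_range.mp hk') hxwf hywf
    · exact rot_unique' hslen h (Finset.mem_range.mp hk) hywf hxwf

theorem stmt_12 (m : Multiset ℕ) (n : ℕ) (hn : Multiset.card m = n) (hn1 : 1 ≤ n)
    (hC : (Multiset.card m : ℤ) - (m.sum : ℤ) = 1) :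
    {w : List ℕ | (↑w : Multiset ℕ) = m ∧ IsWF w}.ncard
        * ∏ d ∈ m.toFinset, (m.count d).factorial
      = (n - 1).factorial := by
  classical
  have hset : {w : List ℕ | (↑w : Multiset ℕ) = m ∧ IsWF w} = ↑(wfF m) := by
    ext w; simp [mem_wfF]
  rw [hset, Set.ncard_coe_finset]
  have hA := permsF_card n m hn
  have hB := permsF_card_eq_mul m n hn hn1 hC
  apply Nat.eq_of_mul_eq_mul_left (show 0 < n by omega)
  calc n * ((wfF m).card * ∏ d ∈ m.toFinset, (m.count d).factorial)
      = (n * (wfF m).card) * ∏ d ∈ m.toFinset, (m.count d).factorial := by ring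
    _ = (permsF m).card * ∏ d ∈ m.toFinset, (m.count d).factorial := by rw [hB]
    _ = n.factorial := hA
    _ = n * (n - 1).factorial := (Nat.mul_factorial_pred (by omega)).symm
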